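/- arXiv:1602.00743 — 2 statements merged into one kernel-verified Lean document; each statement's English description precedes it below -/
import Mathlib

section
/- If ε_n = d_n − 1 for all odd n and ε_n = 0 for all even n, then ∑_{n=1}^∞ (−1)^n ε_n/(d_1⋯d_n) = a_0 − 1; if ε_n = 0 for odd n and ε_n = d_n − 1 for even n, the sum equals a_0. -/
set_option maxHeartbeats 800000


open Finset

/-- Product d_1 d_2 ... d_n. -/
noncomputable def P (d : ℕ → ℕ) (n : ℕ) : ℝ := ∏ i ∈ Finset.Icc 1 n, (d i : ℝ)

/-- The alternating Cantor series sum ∑_{n≥1} (-1)^n ε_n/(d_1...d_n). -/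
noncomputable def negaSum (d ε : ℕ → ℕ) : ℝ :=
  ∑' n : ℕ, (-1 : ℝ) ^ (n + 1) * (ε (n + 1) : ℝ) / P d (n + 1)

/-- a₀ = ∑_{n≥1} (-1)^{n+1}/(d_1...d_n). -/
noncomputable def a0 (d : ℕ → ℕ) : ℝ := ∑' n : ℕ, (-1 : ℝ) ^ n / P d (n + 1)

section aux

variable {d : ℕ → ℕ}

lemma P_zero (d : ℕ → ℕ) : P d 0 = 1 := by simp [P]

lemma P_succ (d : ℕ → ℕ) (n : ℕ) : P d (n + 1) = P d n * d (n + 1) := by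
  unfold P
  rw [Finset.prod_Icc_succ_top (Nat.le_add_left 1 n)]

lemma P_pos (hd : ∀ n, 1 ≤ n → 2 ≤ d n) : ∀ n, 0 < P d n := by
  intro n
  induction n with
  | zero => simp [P_zero]
  | succ k ih =>
      rw [P_succ]
      have h2 : 2 ≤ d (k + 1) := hd _ (Nat.le_add_left 1 k)
      have hdp : (0:ℝ) < d (k + 1) := by exact_mod_cast (by omega : 0 < d (k + 1))
      exact mul_pos ih hdp

lemma P_ge (hd : ∀ n, 1 ≤ n → 2 ≤ d n) : ∀ n, (2:ℝ) ^ n ≤ P d n := by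
  intro n
  induction n with
  | zero => simp [P_zero]
  | succ k ih =>
      rw [P_succ, pow_succ]
      have h2 : (2:ℝ) ≤ d (k + 1) := by exact_mod_cast hd _ (Nat.le_add_left 1 k)
      have hk : (0:ℝ) < (2:ℝ) ^ k := by positivity
      calc (2:ℝ) ^ k * 2 ≤ P d k * 2 := by nlinarith
        _ ≤ P d k * d (k + 1) := by nlinarith [P_pos hd k]

/-- The basic telescoping identity. -/
lemma key (hd : ∀ n, 1 ≤ n → 2 ≤ d n) (n : ℕ) :
    ((d (n + 1) - 1 : ℕ) : ℝ) / P d (n + 1) = 1 / P d n - 1 / P d (n + 1) := by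
  have h2 : 2 ≤ d (n + 1) := hd _ (Nat.le_add_left 1 n)
  have hc : ((d (n + 1) - 1 : ℕ) : ℝ) = (d (n + 1) : ℝ) - 1 := by
    push_cast [Nat.cast_sub (by omega : 1 ≤ d (n + 1))]; ring
  have hPn := P_pos hd n
  have hPn1 := P_pos hd (n + 1)
  have hdpos : (0:ℝ) < (d (n + 1) : ℝ) := by exact_mod_cast (by omega : 0 < d (n+1))
  rw [hc, P_succ]
  field_simp

lemma h_summable (hd : ∀ n, 1 ≤ n → 2 ≤ d n) :
    Summable (fun n => (-1:ℝ) ^ (n + 1) / P d n) := by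
  apply Summable.of_norm_bounded (g := fun n => (1/2 : ℝ) ^ n)
    (summable_geometric_of_lt_one (by norm_num) (by norm_num))
  intro n
  have hP := P_pos hd n
  have hge := P_ge hd n
  have hnorm : ‖(-1:ℝ) ^ (n + 1) / P d n‖ = 1 / P d n := by
    rw [norm_div, norm_pow, norm_neg, norm_one, one_pow, Real.norm_eq_abs, abs_of_pos hP]
  rw [hnorm, div_pow, one_pow]
  exact one_div_le_one_div_of_le (by positivity) hge

end aux

theorem alternating_cantor_extreme_representations (d ε ε' : ℕ → ℕ)
    (hd : ∀ n, 1 ≤ n → 2 ≤ d n)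
    (hεodd : ∀ n, 1 ≤ n → Odd n → ε n = d n - 1)
    (hεeven : ∀ n, 1 ≤ n → Even n → ε n = 0)
    (hε'odd : ∀ n, 1 ≤ n → Odd n → ε' n = 0)
    (hε'even : ∀ n, 1 ≤ n → Even n → ε' n = d n - 1) :
    negaSum d ε = a0 d - 1 ∧ negaSum d ε' = a0 d := by
  set h : ℕ → ℝ := fun n => (-1:ℝ) ^ (n + 1) / P d n with hh
  have hsum : Summable h := h_summable hd
  have hshift : ∀ n : ℕ, h (n + 1) = (-1:ℝ) ^ n / P d (n + 1) := by
    intro n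
    simp only [hh]
    rw [pow_succ, pow_succ]
    ring
  -- a0 = ∑' n, h (n+1)
  have ha0 : a0 d = ∑' n, h (n + 1) := by
    unfold a0; exact tsum_congr fun n => (hshift n).symm
  have hsum_shift : Summable fun n => h (n + 1) := by
    exact (summable_nat_add_iff 1).mpr hsum
  -- total sum of h
  have htot : ∑' n, h n = a0 d - 1 := by
    rw [Summable.tsum_eq_zero_add hsum, ha0]
    have : h 0 = -1 := by simp [hh, P_zero]
    rw [this]; ring
  -- key identity as formulas about h
  have hkey : ∀ n : ℕ, ((d (n + 1) - 1 : ℕ) : ℝ) / P d (n + 1) = 1 / P d n - 1 / P d (n + 1) :=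
    key hd
  -- summability of even/odd extractions of h and its shift
  have he : Summable fun k => h (2 * k) := hsum.comp_injective (fun a b => by omega)
  have ho : Summable fun k => h (2 * k + 1) := hsum.comp_injective (fun a b => by omega)
  have ho2 : Summable fun k => h (2 * k + 2) := hsum.comp_injective (fun a b => by omega)
  constructor
  · -- negaSum d ε
    unfold negaSum
    have ht : ∀ n : ℕ, (-1:ℝ) ^ (n + 1) * (ε (n + 1) : ℝ) / P d (n + 1)
        = if Even n then h n + h (n + 1) else 0 := by
      intro n
      by_cases hn : Even n
      · have hodd : Odd (n + 1) := Even.add_one hn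
        rw [hεodd (n + 1) (Nat.le_add_left 1 n) hodd]
        have hneg : (-1:ℝ) ^ (n + 1) = -1 := by
          rw [Odd.neg_one_pow]; exact_mod_cast hodd
        have heven : (-1:ℝ) ^ n = 1 := hn.neg_one_pow
        rw [if_pos hn, hshift n]
        simp only [hh]
        rw [hneg, heven]
        have h1 : (-1:ℝ) * ((d (n + 1) - 1 : ℕ) : ℝ) / P d (n + 1)
            = -(((d (n + 1) - 1 : ℕ) : ℝ) / P d (n + 1)) := by ring
        rw [h1, hkey n]
        ring
      · have heven : Even (n + 1) := Nat.even_add_one.mpr hn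
        rw [hεeven (n + 1) (Nat.le_add_left 1 n) heven]
        simp [hn]
    rw [tsum_congr ht]
    have hte : Summable fun k => (if Even (2 * k) then h (2 * k) + h (2 * k + 1) else 0) := by
      refine (he.add ho).congr fun k => ?_
      simp [even_two_mul k]
    have hto : Summable fun k => (if Even (2 * k + 1) then h (2 * k + 1) + h (2 * k + 2) else 0) := by
      apply summable_zero.congr
      intro k
      simp [Nat.even_add_one, even_two_mul k]
    rw [← tsum_even_add_odd (f := fun n => if Even n then h n + h (n + 1) else 0) hte hto]
    have e1 : ∑' k, (if Even (2 * k) then h (2 * k) + h (2 * k + 1) else 0)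
        = (∑' k, h (2 * k)) + ∑' k, h (2 * k + 1) := by
      rw [← Summable.tsum_add he ho]
      exact tsum_congr fun k => by simp [even_two_mul k]
    have e2 : ∑' k, (if Even (2 * k + 1) then h (2 * k + 1) + h (2 * k + 2) else 0) = 0 := by
      convert tsum_zero with k
      simp [Nat.even_add_one, even_two_mul k]
    rw [e1, e2, add_zero, tsum_even_add_odd he ho, htot]
  · -- negaSum d ε'
    unfold negaSum
    have ht : ∀ n : ℕ, (-1:ℝ) ^ (n + 1) * (ε' (n + 1) : ℝ) / P d (n + 1)
        = if Even n then 0 else h n + h (n + 1) := by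
      intro n
      by_cases hn : Even n
      · have hodd : Odd (n + 1) := Even.add_one hn
        rw [hε'odd (n + 1) (Nat.le_add_left 1 n) hodd]
        simp [hn]
      · have hnodd : Odd n := Nat.odd_iff.mpr (Nat.not_even_iff.mp hn)
        have heven : Even (n + 1) := Nat.even_add_one.mpr hn
        rw [hε'even (n + 1) (Nat.le_add_left 1 n) heven]
        have hneg : (-1:ℝ) ^ (n + 1) = 1 := heven.neg_one_pow
        have hodd1 : (-1:ℝ) ^ n = -1 := hnodd.neg_one_pow
        rw [if_neg hn, hshift n]
        simp only [hh]
        rw [hneg, hodd1]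
        have h1 : (1:ℝ) * ((d (n + 1) - 1 : ℕ) : ℝ) / P d (n + 1)
            = ((d (n + 1) - 1 : ℕ) : ℝ) / P d (n + 1) := by ring
        rw [h1, hkey n]
        ring
    rw [tsum_congr ht]
    have hte : Summable fun k => (if Even (2 * k) then (0:ℝ) else h (2 * k) + h (2 * k + 1)) := by
      apply summable_zero.congr
      intro k
      simp [even_two_mul k]
    have hto : Summable fun k => (if Even (2 * k + 1) then (0:ℝ) else h (2 * k + 1) + h (2 * k + 2)) := by
      refine (ho.add ho2).congr fun k => ?_
      simp [Nat.even_add_one, even_two_mul k]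
    rw [← tsum_even_add_odd (f := fun n => if Even n then (0:ℝ) else h n + h (n + 1)) hte hto]
    have e1 : ∑' k, (if Even (2 * k) then (0:ℝ) else h (2 * k) + h (2 * k + 1)) = 0 := by
      convert tsum_zero with k
      simp [even_two_mul k]
    have e2 : ∑' k, (if Even (2 * k + 1) then (0:ℝ) else h (2 * k + 1) + h (2 * k + 2))
        = (∑' k, h (2 * k + 1)) + ∑' k, h (2 * k + 2) := by
      rw [← Summable.tsum_add ho ho2]
      exact tsum_congr fun k => by simp [Nat.even_add_one, even_two_mul k]
    have godd : (∑' k, h (2 * k + 1)) + ∑' k, h (2 * k + 2) = ∑' n, h (n + 1) := by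
      have := tsum_even_add_odd
        (f := fun n => h (n + 1))
        (hsum_shift.comp_injective (fun a b => by omega))
        (hsum_shift.comp_injective (fun a b => by omega))
      simpa using this
    rw [e1, e2, zero_add, godd, ← ha0]
end

section
/- If x has alternating Cantor representation with elements (d_n) and digits (ε_n), and φ̂^m(x) = φ̂^{m+c}(x) for some m ≥ 0 and c ≥ 1, then x = (g_m + (−1)^{c+1} d_{m+1}⋯d_{m+c} · g_{m+c}) / (1 + (−1)^{c+1} d_{m+1}⋯d_{m+c}), where g_k = ∑_{i=1}^k (−1)^i ε_i/(d_1⋯d_i); in particular x is rational. -/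
open Finset

/-- k-fold shift of the representation: ∑_{j≥1} (-1)^j ε_{k+j}/(d_{k+1}...d_{k+j}). -/
noncomputable def shift (d ε : ℕ → ℕ) (k : ℕ) : ℝ :=
  ∑' j : ℕ, (-1 : ℝ) ^ (j + 1) * (ε (k + j + 1) : ℝ) / ∏ i ∈ Finset.Icc (k + 1) (k + j + 1), (d i : ℝ)

/-- Partial sum g_k = ∑_{i=1}^k (-1)^i ε_i/(d_1...d_i). -/
noncomputable def g (d ε : ℕ → ℕ) (k : ℕ) : ℝ :=
  ∑ i ∈ Finset.Icc 1 k, (-1 : ℝ) ^ i * (ε i : ℝ) / P d i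

lemma Ppos (d : ℕ → ℕ) (hd : ∀ n, 1 ≤ n → 2 ≤ d n) (n : ℕ) : 0 < P d n := by
  apply Finset.prod_pos
  intro i hi
  have := hd i (Finset.mem_Icc.mp hi).1
  positivity

lemma Pge (d : ℕ → ℕ) (hd : ∀ n, 1 ≤ n → 2 ≤ d n) (n : ℕ) : (2:ℝ)^n ≤ P d n := by
  have : (2:ℝ)^n = ∏ i ∈ Finset.Icc 1 n, (2:ℝ) := by
    rw [Finset.prod_const, Nat.card_Icc]; norm_num
  rw [this]
  apply Finset.prod_le_prod (fun i _ => by norm_num)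
  intro i hi
  exact_mod_cast hd i (Finset.mem_Icc.mp hi).1

lemma Pmul (d : ℕ → ℕ) (k n : ℕ) (h : k ≤ n) :
    P d n = P d k * ∏ i ∈ Finset.Icc (k+1) n, (d i : ℝ) := by
  unfold P
  rw [show Finset.Icc 1 n = Finset.Ioc 0 n from Finset.Icc_add_one_left_eq_Ioc 0 n,
    show Finset.Icc 1 k = Finset.Ioc 0 k from Finset.Icc_add_one_left_eq_Ioc 0 k,
    show Finset.Icc (k+1) n = Finset.Ioc k n from Finset.Icc_add_one_left_eq_Ioc k n,
    Finset.prod_Ioc_consecutive _ (Nat.zero_le k) h]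

lemma hsummable (d ε : ℕ → ℕ) (hd : ∀ n, 1 ≤ n → 2 ≤ d n) (hε : ∀ n, 1 ≤ n → ε n ≤ d n - 1) :
    Summable (fun n : ℕ => (-1 : ℝ) ^ (n + 1) * (ε (n + 1) : ℝ) / P d (n + 1)) := by
  apply Summable.of_norm_bounded summable_geometric_two
  intro n
  have hP1 : 0 < P d (n+1) := Ppos d hd (n+1)
  have hP0 : 0 < P d n := Ppos d hd n
  have hmul : P d (n+1) = P d n * (d (n+1) : ℝ) := by
    rw [Pmul d n (n+1) (Nat.le_succ n)]
    congr 1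
    rw [Finset.Icc_self, Finset.prod_singleton]
  have hεd : (ε (n+1) : ℝ) ≤ (d (n+1) : ℝ) := by
    have h1 := hε (n+1) (Nat.le_add_left 1 n)
    have h2 : ε (n+1) ≤ d (n+1) := le_trans h1 (Nat.sub_le _ _)
    exact_mod_cast h2
  have hd1 : (0:ℝ) < (d (n+1) : ℝ) := by
    have := hd (n+1) (Nat.le_add_left 1 n); positivity
  rw [norm_div, norm_mul, norm_pow, norm_neg, norm_one, one_pow, one_mul]
  rw [Real.norm_natCast, Real.norm_of_nonneg hP1.le]
  rw [div_le_iff₀ hP1, hmul]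
  calc (ε (n+1) : ℝ) ≤ (d (n+1) : ℝ) := hεd
    _ = 1 * (d (n+1) : ℝ) := (one_mul _).symm
    _ ≤ ((1/2:ℝ)^n * P d n) * (d (n+1) : ℝ) := by
        apply mul_le_mul_of_nonneg_right _ hd1.le
        calc (1:ℝ) = (1/2:ℝ)^n * 2^n := by rw [← mul_pow]; norm_num
          _ ≤ (1/2:ℝ)^n * P d n := by
              apply mul_le_mul_of_nonneg_left (Pge d hd n) (by positivity)
    _ = (1/2:ℝ)^n * (P d n * (d (n+1) : ℝ)) := by ring

lemma g_eq_range (d ε : ℕ → ℕ) (k : ℕ) :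
    g d ε k = ∑ i ∈ Finset.range k, (-1 : ℝ) ^ (i + 1) * (ε (i + 1) : ℝ) / P d (i + 1) := by
  induction k with
  | zero => simp [g]
  | succ n ih =>
    rw [Finset.sum_range_succ, ← ih, g, g, Finset.sum_Icc_succ_top (Nat.le_add_left 1 n)]

lemma decomp (d ε : ℕ → ℕ) (hd : ∀ n, 1 ≤ n → 2 ≤ d n) (hε : ∀ n, 1 ≤ n → ε n ≤ d n - 1) (k : ℕ) :
    negaSum d ε = g d ε k + (-1:ℝ)^k / P d k * shift d ε k := by
  have hf := hsummable d ε hd hε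
  have hsplit := (hf.sum_add_tsum_nat_add k).symm
  rw [negaSum, hsplit, g_eq_range]
  congr 1
  rw [shift, ← tsum_mul_left]
  apply tsum_congr
  intro j
  have hPk : (0:ℝ) < P d k := Ppos d hd k
  have hQ : (0:ℝ) < ∏ i ∈ Finset.Icc (k+1) (k+j+1), (d i : ℝ) := by
    apply Finset.prod_pos
    intro i hi
    have hi1 : 1 ≤ i := le_trans (Nat.le_add_left 1 k) (Finset.mem_Icc.mp hi).1
    have := hd i hi1; positivity
  have hPsplit : P d (k+j+1) = P d k * ∏ i ∈ Finset.Icc (k+1) (k+j+1), (d i : ℝ) :=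
    Pmul d k (k+j+1) (by omega)
  have hidx : j + k = k + j := Nat.add_comm j k
  rw [hidx, hPsplit]
  rw [show (k+j+1 : ℕ) = k + (j+1) from by omega, pow_add]
  field_simp

lemma gq_cast (d ε : ℕ → ℕ) (k : ℕ) :
    ((∑ i ∈ Finset.Icc 1 k, (-1:ℚ)^i * (ε i : ℚ) / ∏ j ∈ Finset.Icc 1 i, (d j : ℚ) : ℚ) : ℝ)
      = g d ε k := by
  rw [g]
  push_cast [P]
  rfl

lemma Qq_cast (d : ℕ → ℕ) (a b : ℕ) :
    ((∏ i ∈ Finset.Icc a b, (d i : ℚ) : ℚ) : ℝ) = ∏ i ∈ Finset.Icc a b, (d i : ℝ) := by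
  push_cast
  rfl

theorem eventually_periodic_shift_rational (d ε : ℕ → ℕ) (m c : ℕ)
    (hc : 1 ≤ c) (hd : ∀ n, 1 ≤ n → 2 ≤ d n) (hε : ∀ n, 1 ≤ n → ε n ≤ d n - 1)
    (hper : shift d ε m = shift d ε (m + c)) :
    negaSum d ε =
      (g d ε m + (-1 : ℝ) ^ (c + 1) * (∏ i ∈ Finset.Icc (m + 1) (m + c), (d i : ℝ)) * g d ε (m + c)) /
        (1 + (-1 : ℝ) ^ (c + 1) * ∏ i ∈ Finset.Icc (m + 1) (m + c), (d i : ℝ)) ∧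
    ∃ q : ℚ, negaSum d ε = (q : ℝ) := by
  have h1 := decomp d ε hd hε m
  have h2 := decomp d ε hd hε (m + c)
  rw [← hper] at h2
  set x := negaSum d ε with hx
  set S := shift d ε m with hS
  set Q := ∏ i ∈ Finset.Icc (m + 1) (m + c), (d i : ℝ) with hQdef
  set gm := g d ε m with hgm
  set gmc := g d ε (m + c) with hgmc
  have hPm : (0:ℝ) < P d m := Ppos d hd m
  have hPmc : P d (m + c) = P d m * Q := Pmul d m (m + c) (Nat.le_add_right m c)
  have hQ2 : (2:ℝ) ≤ Q := by
    have h2c : (2:ℝ)^c = ∏ i ∈ Finset.Icc (m+1) (m+c), (2:ℝ) := by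
      rw [Finset.prod_const, Nat.card_Icc]
      congr 1
      omega
    calc (2:ℝ) ≤ 2^c := by
          calc (2:ℝ) = 2^1 := (pow_one 2).symm
            _ ≤ 2^c := pow_le_pow_right₀ (by norm_num) hc
      _ = ∏ i ∈ Finset.Icc (m+1) (m+c), (2:ℝ) := h2c
      _ ≤ Q := by
          apply Finset.prod_le_prod (fun i _ => by norm_num)
          intro i hi
          have hi1 : 1 ≤ i := le_trans (Nat.le_add_left 1 m) (Finset.mem_Icc.mp hi).1
          exact_mod_cast hd i hi1
  have hQpos : (0:ℝ) < Q := lt_of_lt_of_le (by norm_num) hQ2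
  -- eliminate S
  have huS : (-1:ℝ)^m * S = (x - gm) * P d m := by
    have : (-1:ℝ)^m / P d m * S = x - gm := by linarith [h1]
    field_simp at this
    linarith [this]
  rw [hPmc, pow_add] at h2
  have h4 : x * Q = gmc * Q + (-1:ℝ)^c * (x - gm) := by
    apply mul_left_cancel₀ (ne_of_gt hPm)
    have h2' : x * (P d m * Q) = gmc * (P d m * Q) + (-1:ℝ)^m * (-1:ℝ)^c * S := by
      field_simp at h2
      linarith [h2]
    linear_combination h2' + (-1:ℝ)^c * huS
  have hmain : x = (gm + (-1:ℝ)^(c+1) * Q * gmc) / (1 + (-1:ℝ)^(c+1) * Q) := by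
    rcases Nat.even_or_odd c with hce | hco
    · have hv : ((-1:ℝ))^c = 1 := hce.neg_one_pow
      have hv1 : ((-1:ℝ))^(c+1) = -1 := by
        rw [pow_succ, hv]; ring
      rw [hv] at h4
      rw [hv1]
      have hne : (1:ℝ) + (-1) * Q ≠ 0 := by nlinarith
      rw [eq_div_iff hne]
      linear_combination -h4
    · have hv : ((-1:ℝ))^c = -1 := hco.neg_one_pow
      have hv1 : ((-1:ℝ))^(c+1) = 1 := by
        rw [pow_succ, hv]; ring
      rw [hv] at h4
      rw [hv1]
      have hne : (1:ℝ) + 1 * Q ≠ 0 := by nlinarith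
      rw [eq_div_iff hne]
      linear_combination h4
  refine ⟨hmain, ?_⟩
  set qgm : ℚ := ∑ i ∈ Finset.Icc 1 m, (-1:ℚ)^i * (ε i : ℚ) / ∏ j ∈ Finset.Icc 1 i, (d j : ℚ)
  set qgmc : ℚ := ∑ i ∈ Finset.Icc 1 (m+c), (-1:ℚ)^i * (ε i : ℚ) / ∏ j ∈ Finset.Icc 1 i, (d j : ℚ)
  set qQ : ℚ := ∏ i ∈ Finset.Icc (m+1) (m+c), (d i : ℚ)
  refine ⟨(qgm + (-1:ℚ)^(c+1) * qQ * qgmc) / (1 + (-1:ℚ)^(c+1) * qQ), ?_⟩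
  rw [hmain]
  have e1 : ((qgm : ℚ) : ℝ) = gm := gq_cast d ε m
  have e2 : ((qgmc : ℚ) : ℝ) = gmc := gq_cast d ε (m+c)
  have e3 : ((qQ : ℚ) : ℝ) = Q := Qq_cast d (m+1) (m+c)
  push_cast [e1, e2, e3]
  ring
end
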